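/- Let D be a Δ-implication class of an edge-labelled graph such that D ≠ D⁻¹. Then D is transitive: if (a,b) ∈ D and (b,c) ∈ D, then (a,c) ∈ D. -/

import Mathlib

/-!
Graphs here are finite, undirected, without parallel edges, and have a loop at
every vertex.  We model them as symmetric reflexive relations.
-/

structure LoopGraph (V : Type) where
  Adj : V → V → Prop
  symm : ∀ u v, Adj u v → Adj v u
  refl : ∀ u, Adj u u

namespace LoopGraph

variable {V W : Type}

/-- Closed neighbourhood `N[u]`. -/
def nbhd (G : LoopGraph V) (u : V) : Set V := {v | G.Adj u v}

/-- `u` is a universal vertex. -/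
def Universal (G : LoopGraph V) (u : V) : Prop := ∀ v, G.Adj u v

/-- `u ≠ v` are true twins if `N[u] = N[v]`. -/
def TrueTwins (G : LoopGraph V) (u v : V) : Prop := u ≠ v ∧ G.nbhd u = G.nbhd v

/-- `uv` is an inclusion edge: it is an edge and `N[u] ⊆ N[v]` or `N[v] ⊆ N[u]`. -/
def InclusionEdge (G : LoopGraph V) (u v : V) : Prop :=
  G.Adj u v ∧ (G.nbhd u ⊆ G.nbhd v ∨ G.nbhd v ⊆ G.nbhd u)

/-- `u` overlaps `v`: they are adjacent and their closed neighbourhoods are incomparable. -/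
def Overlaps (G : LoopGraph V) (u v : V) : Prop :=
  G.Adj u v ∧ ¬ G.nbhd u ⊆ G.nbhd v ∧ ¬ G.nbhd v ⊆ G.nbhd u

/-- `{u,v}` is a spanning pair. -/
def SpanningPair (G : LoopGraph V) (u v : V) : Prop :=
  (∀ x, ¬ G.Adj v x → G.nbhd x ⊆ G.nbhd u) ∧
  (∀ y, ¬ G.Adj u y → G.nbhd y ⊆ G.nbhd v)

/-- `uv` is a 2-overlap edge: an overlap edge forming a spanning pair. -/
def TwoOverlapEdge (G : LoopGraph V) (u v : V) : Prop :=
  G.Overlaps u v ∧ G.SpanningPair u v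

/-- `uv` is a 1-overlap edge: an overlap edge not forming a spanning pair. -/
def OneOverlapEdge (G : LoopGraph V) (u v : V) : Prop :=
  G.Overlaps u v ∧ ¬ G.SpanningPair u v

/-- `{u,v}` is a circular pair: a non-adjacent spanning pair. -/
def CircularPair (G : LoopGraph V) (u v : V) : Prop :=
  G.SpanningPair u v ∧ ¬ G.Adj u v

/-- Every vertex belongs to some circular pair. -/
def CircularlyPaired (G : LoopGraph V) : Prop := ∀ u, ∃ v, G.CircularPair u v

/-- A walk with `k` edges: vertices `P 0, …, P k` with consecutive vertices adjacent. -/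
def IsWalk (G : LoopGraph V) (k : ℕ) (P : ℕ → V) : Prop :=
  ∀ i < k, G.Adj (P i) (P (i + 1))

/-- Vertex `z` avoids the edge `ab`: every neighbour of `z` among `a, b` overlaps `z`,
and if `z` overlaps both `a` and `b` then `a, b` do not overlap each other. -/
def AvoidsEdge (G : LoopGraph V) (z a b : V) : Prop :=
  (G.Adj z a → G.Overlaps z a) ∧ (G.Adj z b → G.Overlaps z b) ∧
  (G.Overlaps z a → G.Overlaps z b → ¬ G.Overlaps a b)

/-- Vertex `z` and the walk `P` (with `k` edges) avoid each other. -/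
def AvoidsWalk (G : LoopGraph V) (z : V) (k : ℕ) (P : ℕ → V) : Prop :=
  (∀ i ≤ k, G.Adj z (P i) → G.Overlaps z (P i)) ∧
  (∀ i < k, G.Overlaps z (P i) → G.Overlaps z (P (i + 1)) →
    ¬ G.Overlaps (P i) (P (i + 1)))

/-- The walks `P` and `Q` (both with `k` edges) avoid each other. -/
def WalksAvoid (G : LoopGraph V) (k : ℕ) (P Q : ℕ → V) : Prop :=
  ∀ i < k, G.AvoidsEdge (P i) (Q i) (Q (i + 1)) ∧ G.AvoidsEdge (Q (i + 1)) (P i) (P (i + 1))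

/-- `{x,y}` is a `z`-invertible pair, i.e. an invertible pair anchored at `z`. -/
def ZInvertiblePair (G : LoopGraph V) (z x y : V) : Prop :=
  x ≠ y ∧ x ≠ z ∧ y ≠ z ∧
  ∃ k, ∃ P Q : ℕ → V, G.IsWalk k P ∧ G.IsWalk k Q ∧
    P 0 = x ∧ P k = y ∧ Q 0 = y ∧ Q k = x ∧
    G.WalksAvoid k P Q ∧ G.AvoidsWalk z k P ∧ G.AvoidsWalk z k Q

/-- `G` contains an anchored invertible pair. -/
def HasAnchoredInvertiblePair (G : LoopGraph V) : Prop :=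
  ∃ z x y, G.ZInvertiblePair z x y

end LoopGraph

/-!
Circular arcs: the circle is modelled as the half-open interval `[0,1)`;
an arc is described by its left and right endpoints (clockwise = increasing),
wrapping around if necessary.
-/

/-- Membership of the point `t` in the clockwise arc from `l` to `r`. -/
def arcMem (l r t : ℝ) : Prop :=
  (l ≤ r ∧ l ≤ t ∧ t ≤ r) ∨ (r < l ∧ (l ≤ t ∨ t ≤ r))

/-- The arc `[l₁,r₁]` is contained in the arc `[l₂,r₂]`. -/
def arcSubset (l₁ r₁ l₂ r₂ : ℝ) : Prop :=
  ∀ t ∈ Set.Ico (0 : ℝ) 1, arcMem l₁ r₁ t → arcMem l₂ r₂ t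

/-- The arc `[lu,ru]` properly contains the arc `[lv,rv]`. -/
def arcProperContains (lu ru lv rv : ℝ) : Prop :=
  arcSubset lv rv lu ru ∧ ¬ arcSubset lu ru lv rv

/-- The arcs `[lu,ru]` and `[lv,rv]` together cover the whole circle. -/
def arcsCover (lu ru lv rv : ℝ) : Prop :=
  ∀ t ∈ Set.Ico (0 : ℝ) 1, arcMem lu ru t ∨ arcMem lv rv t

/-- `b` lies strictly between `a` and `c` in the clockwise cyclic order on `[0,1)`. -/
def cycBtw (a b c : ℝ) : Prop :=
  (a < b ∧ b < c) ∨ (b < c ∧ c < a) ∨ (c < a ∧ a < b)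

/-- The four points `a, b, c, d` of `[0,1)` occur in this clockwise cyclic order. -/
def cyc4 (a b c d : ℝ) : Prop := cycBtw a b c ∧ cycBtw a c d

namespace LoopGraph

variable {V W : Type}

/-- `(l, r)` is a circular-arc representation of `G`: all endpoints are distinct and
two vertices are adjacent iff their arcs intersect. -/
def IsCARep (G : LoopGraph V) (l r : V → ℝ) : Prop :=
  (∀ v, l v ∈ Set.Ico (0 : ℝ) 1) ∧ (∀ v, r v ∈ Set.Ico (0 : ℝ) 1) ∧
  Function.Injective (Sum.elim l r) ∧
  ∀ u v, (G.Adj u v ↔ ∃ t ∈ Set.Ico (0 : ℝ) 1,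
    arcMem (l u) (r u) t ∧ arcMem (l v) (r v) t)

/-- `G` is a circular-arc graph. -/
def IsCircularArc (G : LoopGraph V) : Prop := ∃ l r : V → ℝ, G.IsCARep l r

/-- A normalized circular-arc representation of `G`. -/
def IsNormalizedRep (G : LoopGraph V) (l r : V → ℝ) : Prop :=
  G.IsCARep l r ∧
  ∀ u v, G.Adj u v → u ≠ v →
    (arcProperContains (l u) (r u) (l v) (r v) ↔ G.nbhd v ⊆ G.nbhd u) ∧
    (arcsCover (l u) (r u) (l v) (r v) ↔ G.TwoOverlapEdge u v)

/-- A circular-arc representation of the induced subgraph `G[X]` which is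
normalized with respect to `G`. -/
def IsNormalizedRepOn (G : LoopGraph V) (X : Set V) (l r : V → ℝ) : Prop :=
  (∀ v ∈ X, l v ∈ Set.Ico (0 : ℝ) 1) ∧ (∀ v ∈ X, r v ∈ Set.Ico (0 : ℝ) 1) ∧
  Set.InjOn l X ∧ Set.InjOn r X ∧ (∀ u ∈ X, ∀ v ∈ X, l u ≠ r v) ∧
  (∀ u ∈ X, ∀ v ∈ X,
    (G.Adj u v ↔ ∃ t ∈ Set.Ico (0 : ℝ) 1,
      arcMem (l u) (r u) t ∧ arcMem (l v) (r v) t)) ∧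
  (∀ u ∈ X, ∀ v ∈ X, G.Adj u v → u ≠ v →
    (arcProperContains (l u) (r u) (l v) (r v) ↔ G.nbhd v ⊆ G.nbhd u) ∧
    (arcsCover (l u) (r u) (l v) (r v) ↔ G.TwoOverlapEdge u v))

/-! Circular completions. -/

/-- `f` exhibits `G` as an induced subgraph of `H`. -/
def InducedEmb (G : LoopGraph V) (H : LoopGraph W) (f : V → W) : Prop :=
  Function.Injective f ∧ ∀ u v, (G.Adj u v ↔ H.Adj (f u) (f v))

/-- Every edge of `G` has the same type (inclusion / 1-overlap / 2-overlap)
in `G` and in `H`. -/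
def SameEdgeTypes (G : LoopGraph V) (H : LoopGraph W) (f : V → W) : Prop :=
  ∀ u v, G.Adj u v →
    ((G.InclusionEdge u v ↔ H.InclusionEdge (f u) (f v)) ∧
     (G.OneOverlapEdge u v ↔ H.OneOverlapEdge (f u) (f v)) ∧
     (G.TwoOverlapEdge u v ↔ H.TwoOverlapEdge (f u) (f v)))

/-- `H` (with embedding `f`) is a circular completion of `G`: a circularly-paired
graph with the fewest possible vertices containing `G` as an induced subgraph with
all edge types preserved. -/
def IsCircularCompletion (G : LoopGraph V) (H : LoopGraph W) (f : V → W) : Prop :=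
  Finite W ∧ G.InducedEmb H f ∧ G.SameEdgeTypes H f ∧ H.CircularlyPaired ∧
  ∀ (W' : Type) (H' : LoopGraph W') (f' : V → W'), Finite W' →
    G.InducedEmb H' f' → G.SameEdgeTypes H' f' → H'.CircularlyPaired →
    Nat.card W ≤ Nat.card W'

/-! The anchored Δ-knotting graph. -/

/-- `A(z)`: vertices nonadjacent to `z` or overlapping `z`. -/
def Aset (G : LoopGraph V) (z : V) : Set V := {u | ¬ G.Adj z u ∨ G.Overlaps z u}

/-- `x` and `y` are `uz`-connected. -/
def UZConnected (G : LoopGraph V) (u z x y : V) : Prop :=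
  ¬ G.InclusionEdge x u ∧ ¬ G.InclusionEdge y u ∧ ¬ G.InclusionEdge x z ∧
  ¬ G.InclusionEdge y z ∧ ¬ G.InclusionEdge u z ∧
  ∃ k, ∃ P : ℕ → V, G.IsWalk k P ∧ P 0 = x ∧ P k = y ∧
    G.AvoidsWalk u k P ∧ G.AvoidsWalk z k P

/-- `X` is a `uz`-component: a maximal set of pairwise `uz`-connected vertices. -/
def IsUZComponent (G : LoopGraph V) (u z : V) (X : Set V) : Prop :=
  X.Nonempty ∧ (∀ x ∈ X, ∀ y ∈ X, G.UZConnected u z x y) ∧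
  ∀ Y : Set V, X ⊆ Y → (∀ x ∈ Y, ∀ y ∈ Y, G.UZConnected u z x y) → Y = X

/-- Vertices of the `z`-anchored Δ-knotting graph: copies `(u, X)` of `u ∈ A(z)`,
one for each `uz`-component `X`. -/
def KnotVertex (G : LoopGraph V) (z : V) (p : V × Set V) : Prop :=
  p.1 ∈ G.Aset z ∧ G.IsUZComponent p.1 z p.2

/-- Edges of the `z`-anchored Δ-knotting graph: for each edge `uv` of `G` with
`u, v ∈ A(z)`, an edge between the copy of `u` for `X` and the copy of `v` for `Y`
whenever `v ∈ X` and `u ∈ Y`. -/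
def KnotAdj (G : LoopGraph V) (z : V) (p q : V × Set V) : Prop :=
  G.Adj p.1 q.1 ∧ p.1 ∈ G.Aset z ∧ q.1 ∈ G.Aset z ∧ q.1 ∈ p.2 ∧ p.1 ∈ q.2

/-- The `z`-anchored Δ-knotting graph of `G` is bipartite (it is 2-colourable). -/
def KnotBipartite (G : LoopGraph V) (z : V) : Prop :=
  ∃ c : V × Set V → Bool, ∀ p q, G.KnotVertex z p → G.KnotVertex z q →
    G.KnotAdj z p q → c p ≠ c q

/-! Non-inverting sets. -/

/-- `X` is a non-inverting set of `G`. -/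
def NonInvertingSet (G : LoopGraph V) (X : Set V) : Prop :=
  (∀ u ∈ X, ∀ v ∈ X, ¬ G.TwoOverlapEdge u v) ∧
  ¬ ∃ x ∈ X, ∃ y ∈ X, ∃ k, 0 < k ∧ ∃ P Q : ℕ → V,
      G.IsWalk k P ∧ G.IsWalk k Q ∧ (∀ i ≤ k, P i ∈ X) ∧ (∀ i ≤ k, Q i ∈ X) ∧
      P 0 = x ∧ P k = y ∧ Q 0 = y ∧ Q k = x ∧ G.WalksAvoid k P Q

end LoopGraph

/-!
Edge-labelled graphs: graphs (with loops) in which every edge is labelled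
inclusion or overlap, loops being labelled inclusion.
-/

structure ELGraph (V : Type) where
  Adj : V → V → Prop
  symm : ∀ u v, Adj u v → Adj v u
  refl : ∀ u, Adj u u
  /-- `Ovl u v` means the edge `uv` is labelled as an overlap edge. -/
  Ovl : V → V → Prop
  ovl_symm : ∀ u v, Ovl u v → Ovl v u
  ovl_adj : ∀ u v, Ovl u v → Adj u v
  ovl_irrefl : ∀ u, ¬ Ovl u u

namespace ELGraph

variable {V : Type}

/-- Closed neighbourhood `N[u]`. -/
def nbhd (G : ELGraph V) (u : V) : Set V := {v | G.Adj u v}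

/-- `uv` is (labelled as) an inclusion edge. -/
def InclEdge (G : ELGraph V) (u v : V) : Prop := G.Adj u v ∧ ¬ G.Ovl u v

/-- A walk with `k` edges. -/
def IsWalk (G : ELGraph V) (k : ℕ) (P : ℕ → V) : Prop :=
  ∀ i < k, G.Adj (P i) (P (i + 1))

/-- `z` avoids the edge `ab`: every neighbour of `z` among `a, b` overlaps `z`, and if
`z` overlaps both `a` and `b` then the edge `ab` is an inclusion edge. -/
def AvoidsEdge (G : ELGraph V) (z a b : V) : Prop :=
  (G.Adj z a → G.Ovl z a) ∧ (G.Adj z b → G.Ovl z b) ∧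
  (G.Ovl z a → G.Ovl z b → ¬ G.Ovl a b)

/-- The walks `P` and `Q` (both with `k` edges) avoid each other. -/
def WalksAvoid (G : ELGraph V) (k : ℕ) (P Q : ℕ → V) : Prop :=
  ∀ i < k, G.AvoidsEdge (P i) (Q i) (Q (i + 1)) ∧ G.AvoidsEdge (Q (i + 1)) (P i) (P (i + 1))

/-- The ordered pair `p` is related to the ordered pair `q`: there exist a walk from
`p.1` to `q.1` and a walk from `p.2` to `q.2`, of the same (positive) length, that
avoid each other. -/
def Related (G : ELGraph V) (p q : V × V) : Prop :=
  ∃ k, 0 < k ∧ ∃ P Q : ℕ → V, G.IsWalk k P ∧ G.IsWalk k Q ∧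
    P 0 = p.1 ∧ Q 0 = p.2 ∧ P k = q.1 ∧ Q k = q.2 ∧ G.WalksAvoid k P Q

/-- A Δ-implication class: a maximal set of pairwise related ordered pairs. -/
def IsDeltaClass (G : ELGraph V) (A : Set (V × V)) : Prop :=
  A.Nonempty ∧ (∀ p ∈ A, ∀ q ∈ A, G.Related p q) ∧
  ∀ B : Set (V × V), A ⊆ B → (∀ p ∈ B, ∀ q ∈ B, G.Related p q) → B = A

/-- `A⁻¹ = {(u,v) : (v,u) ∈ A}`. -/
def inv (A : Set (V × V)) : Set (V × V) := {p | p.swap ∈ A}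

/-- `span A`: the set of vertices incident to pairs of `A`. -/
def span (A : Set (V × V)) : Set V := {v | ∃ p ∈ A, v = p.1 ∨ v = p.2}

/-- `S` induces a clique. -/
def IsClique (G : ELGraph V) (S : Set V) : Prop := ∀ a ∈ S, ∀ b ∈ S, G.Adj a b

/-- A Δ-module. -/
def IsDeltaModule (G : ELGraph V) (S : Set V) : Prop :=
  S.Nonempty ∧
  (∀ x, x ∉ S →
    ((∀ s ∈ S, ¬ G.Adj x s) ∨ (∀ s ∈ S, G.InclEdge x s) ∨ (∀ s ∈ S, G.Ovl x s))) ∧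
  (¬ G.IsClique S → ∀ x, x ∉ S → ∀ s ∈ S, ¬ G.Ovl x s)

/-- A trivial Δ-module: the whole vertex set or a single vertex. -/
def TrivialModule (S : Set V) : Prop := S = Set.univ ∨ ∃ a : V, S = {a}

/-- `{a,b}` is a Δ-invertible pair: `(a,b)` is related to `(b,a)`. -/
def DeltaInvertiblePair (G : ELGraph V) (a b : V) : Prop := G.Related (a, b) (b, a)

/-- An interval ordering of an edge-labelled graph. -/
def IsIntervalOrdering (G : ELGraph V) (lt : V → V → Prop) : Prop :=
  IsStrictTotalOrder V lt ∧
  ¬ ∃ a b c, lt a b ∧ lt b c ∧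
    ((¬ G.Adj a b ∧ G.Adj a c) ∨
     (G.InclEdge a b ∧ ¬ G.Adj a c ∧ G.Adj b c) ∨
     (G.Ovl a b ∧ G.Adj a c ∧ ¬ G.Adj b c) ∨
     (G.Ovl a b ∧ G.Ovl b c ∧ G.InclEdge a c) ∨
     (G.InclEdge a b ∧ G.InclEdge b c ∧ G.Ovl a c))

/-- An interval representation of `G` consistent with its labelling. -/
def IsConsistentIntervalRep (G : ELGraph V) (l r : V → ℝ) : Prop :=
  (∀ v, l v ≤ r v) ∧
  (∀ u v, (G.Adj u v ↔ (Set.Icc (l u) (r u) ∩ Set.Icc (l v) (r v)).Nonempty)) ∧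
  (∀ u v, (G.Ovl u v ↔
    ((Set.Icc (l u) (r u) ∩ Set.Icc (l v) (r v)).Nonempty ∧
     ¬ Set.Icc (l u) (r u) ⊆ Set.Icc (l v) (r v) ∧
     ¬ Set.Icc (l v) (r v) ⊆ Set.Icc (l u) (r u))))

/-- A consistently edge-labelled graph: there is a transitive orientation `D` of its
inclusion edges (between distinct vertices) such that `D u v → N[v] ⊆ N[u]`. -/
def ConsistentlyLabelled (G : ELGraph V) : Prop :=
  ∃ D : V → V → Prop,
    (∀ u v, D u v → u ≠ v ∧ G.InclEdge u v) ∧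
    (∀ u v, u ≠ v → G.InclEdge u v → (D u v ↔ ¬ D v u)) ∧
    (∀ u v w, D u v → D v w → D u w) ∧
    (∀ u v, D u v → G.nbhd v ⊆ G.nbhd u)

end ELGraph

namespace ELGraph

variable {V : Type}

/-- One forcing step between ordered pairs. -/
def Step (G : ELGraph V) (p q : V × V) : Prop :=
  G.Adj p.1 q.1 ∧ G.Adj p.2 q.2 ∧ G.AvoidsEdge p.1 p.2 q.2 ∧ G.AvoidsEdge q.2 p.1 q.1

variable {G : ELGraph V} {D : Set (V × V)}

lemma nice_symm {x y : V} (h : G.Adj x y → G.Ovl x y) : G.Adj y x → G.Ovl y x :=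
  fun ha => G.ovl_symm _ _ (h (G.symm _ _ ha))

lemma related_of_step {p q : V × V} (h : G.Step p q) : G.Related p q := by
  obtain ⟨h1, h2, h3, h4⟩ := h
  refine ⟨1, one_pos, (fun i => if i = 0 then p.1 else q.1),
    (fun i => if i = 0 then p.2 else q.2), ?_, ?_, by simp, by simp, by simp, by simp, ?_⟩
  · intro i hi; interval_cases i; simpa using h1
  · intro i hi; interval_cases i; simpa using h2
  · intro i hi; interval_cases i
    exact ⟨by simpa using h3, by simpa using h4⟩

private def catW (k : ℕ) (P P' : ℕ → V) : ℕ → V := fun i => if i < k then P i else P' (i - k)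

private lemma catW_left {k : ℕ} {P P' : ℕ → V} (h : P k = P' 0) {i : ℕ} (hi : i ≤ k) :
    catW k P P' i = P i := by
  by_cases hik : i < k
  · simp [catW, hik]
  · have : i = k := by omega
    subst this
    simp [catW, h]

private lemma catW_right {k : ℕ} {P P' : ℕ → V} {i : ℕ} (hi : k ≤ i) :
    catW k P P' i = P' (i - k) := by
  simp [catW, Nat.not_lt.2 hi]

lemma related_trans {p q r : V × V} (h1 : G.Related p q) (h2 : G.Related q r) :
    G.Related p r := by
  obtain ⟨k, hk, P, Q, hwP, hwQ, hP0, hQ0, hPk, hQk, hA⟩ := h1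
  obtain ⟨m, hm, P', Q', hwP', hwQ', hP0', hQ0', hPm, hQm, hA'⟩ := h2
  have hPP : P k = P' 0 := by rw [hPk, hP0']
  have hQQ : Q k = Q' 0 := by rw [hQk, hQ0']
  refine ⟨k + m, by omega, catW k P P', catW k Q Q', ?_, ?_, ?_, ?_, ?_, ?_, ?_⟩
  · intro i hi
    by_cases h : i < k
    · rw [catW_left hPP (by omega), catW_left hPP (by omega)]
      exact hwP i h
    · rw [catW_right (by omega), catW_right (by omega), show i + 1 - k = (i - k) + 1 by omega]
      exact hwP' (i - k) (by omega)
  · intro i hi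
    by_cases h : i < k
    · rw [catW_left hQQ (by omega), catW_left hQQ (by omega)]
      exact hwQ i h
    · rw [catW_right (by omega), catW_right (by omega), show i + 1 - k = (i - k) + 1 by omega]
      exact hwQ' (i - k) (by omega)
  · rw [catW_left hPP (by omega)]; exact hP0
  · rw [catW_left hQQ (by omega)]; exact hQ0
  · rw [catW_right (by omega), show k + m - k = m by omega]; exact hPm
  · rw [catW_right (by omega), show k + m - k = m by omega]; exact hQm
  · intro i hi
    by_cases h : i < k
    · rw [catW_left hPP (by omega), catW_left hPP (by omega),
        catW_left hQQ (by omega), catW_left hQQ (by omega)]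
      exact hA i h
    · rw [catW_right (by omega), catW_right (by omega), catW_right (by omega),
        catW_right (by omega), show i + 1 - k = (i - k) + 1 by omega]
      exact hA' (i - k) (by omega)

lemma related_iff_transGen {p q : V × V} :
    G.Related p q ↔ Relation.TransGen G.Step p q := by
  constructor
  · rintro ⟨k, hk, P, Q, hwP, hwQ, hP0, hQ0, hPk, hQk, hA⟩
    have key : ∀ i, i < k → Relation.TransGen G.Step (P 0, Q 0) (P (i + 1), Q (i + 1)) := by
      intro i
      induction i with
      | zero =>
        intro h
        exact Relation.TransGen.single ⟨hwP 0 h, hwQ 0 h, (hA 0 h).1, (hA 0 h).2⟩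
      | succ n ih =>
        intro h
        exact (ih (by omega)).tail ⟨hwP (n + 1) h, hwQ (n + 1) h, (hA (n + 1) h).1, (hA (n + 1) h).2⟩
    have hfin := key (k - 1) (by omega)
    rw [show k - 1 + 1 = k by omega, hP0, hQ0, hPk, hQk] at hfin
    simpa using hfin
  · intro h
    induction h with
    | single h => exact related_of_step h
    | tail _ h ih => exact related_trans ih (related_of_step h)

lemma avoidsEdge_symm {z x y : V} (h : G.AvoidsEdge z x y) : G.AvoidsEdge z y x :=
  ⟨h.2.1, h.1, fun h1 h2 ho => h.2.2 h2 h1 (G.ovl_symm _ _ ho)⟩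

lemma step_swap {p q : V × V} (h : G.Step p q) : G.Step (q.2, q.1) (p.2, p.1) :=
  ⟨G.symm _ _ h.2.1, G.symm _ _ h.1, avoidsEdge_symm h.2.2.2, avoidsEdge_symm h.2.2.1⟩

lemma related_swap {p q : V × V} (h : G.Related p q) : G.Related (q.2, q.1) (p.2, p.1) := by
  rw [related_iff_transGen] at h ⊢
  induction h with
  | single h => exact Relation.TransGen.single (step_swap h)
  | tail _ h ih => exact (Relation.TransGen.single (step_swap h)).trans ih

lemma mem_of_rel (hD : G.IsDeltaClass D) {p r q : V × V} (hp : p ∈ D) (hr : r ∈ D)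
    (h1 : G.Related p q) (h2 : G.Related q r) : q ∈ D := by
  have hB : ∀ s ∈ insert q D, ∀ t ∈ insert q D, G.Related s t := by
    intro s hs t ht
    rcases Set.mem_insert_iff.1 hs with hs' | hs' <;> rcases Set.mem_insert_iff.1 ht with ht' | ht'
    · rw [hs', ht']; exact related_trans h2 (related_trans (hD.2.1 _ hr _ hp) h1)
    · rw [hs']; exact related_trans h2 (hD.2.1 _ hr _ ht')
    · rw [ht']; exact related_trans (hD.2.1 _ hs' _ hp) h1
    · exact hD.2.1 _ hs' _ ht' 
  have := hD.2.2 (insert q D) (Set.subset_insert _ _) hB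
  rw [← this]; exact Set.mem_insert _ _

lemma nice_of_mem (hD : G.IsDeltaClass D) {u v : V} (h : (u, v) ∈ D) :
    G.Adj u v → G.Ovl u v := by
  obtain ⟨k, hk, P, Q, _, _, hP0, hQ0, _, _, hA⟩ := hD.2.1 _ h _ h
  have := (hA 0 hk).1.1
  rw [hP0, hQ0] at this
  exact this

lemma step_mx {m x w : V} (hxw : G.Adj x w) (h3 : G.Ovl m x → G.Ovl m w → ¬ G.Ovl x w)
    (hmx : G.Adj m x → G.Ovl m x) (hmw : G.Adj m w → G.Ovl m w) :
    G.Step (m, x) (m, w) ∧ G.Step (x, m) (w, m) :=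
  ⟨⟨G.refl m, hxw, ⟨hmx, hmw, h3⟩,
      ⟨nice_symm hmw, nice_symm hmw, fun _ _ => G.ovl_irrefl m⟩⟩,
   ⟨hxw, G.refl m, ⟨nice_symm hmx, nice_symm hmx, fun _ _ => G.ovl_irrefl m⟩,
      ⟨hmx, hmw, h3⟩⟩⟩

lemma exch_mem_left (hD : G.IsDeltaClass D) {m x w : V} (hmemw : (m, w) ∈ D)
    (hxw : G.Adj x w) (h3 : G.Ovl m x → G.Ovl m w → ¬ G.Ovl x w)
    (hmx : G.Adj m x → G.Ovl m x) (hmw : G.Adj m w → G.Ovl m w) : (m, x) ∈ D := by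
  have s1 := (step_mx hxw h3 hmx hmw).1
  have s2 := (step_mx (G.symm _ _ hxw) (fun h2 h1 ho => h3 h1 h2 (G.ovl_symm _ _ ho)) hmw hmx).1
  exact mem_of_rel hD hmemw hmemw (related_of_step s2) (related_of_step s1)

lemma exch_mem_right (hD : G.IsDeltaClass D) {m x w : V} (hmemw : (w, m) ∈ D)
    (hxw : G.Adj x w) (h3 : G.Ovl m x → G.Ovl m w → ¬ G.Ovl x w)
    (hmx : G.Adj m x → G.Ovl m x) (hmw : G.Adj m w → G.Ovl m w) : (x, m) ∈ D := by
  have s1 := (step_mx hxw h3 hmx hmw).2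
  have s2 := (step_mx (G.symm _ _ hxw) (fun h2 h1 ho => h3 h1 h2 (G.ovl_symm _ _ ho)) hmw hmx).2
  exact mem_of_rel hD hmemw hmemw (related_of_step s2) (related_of_step s1)

lemma main_step (hD : G.IsDeltaClass D) (hdisj : ∀ p ∈ D, p.swap ∉ D)
    {a y z y' z' : V}
    (hs : G.Step (y, z) (y', z')) (hyz : (y, z) ∈ D) (hyz' : (y', z') ∈ D)
    (hay : (a, y) ∈ D) (haz : G.Adj a z → G.Ovl a z) :
    G.Step (a, z) (a, z') ∧ ((a, y') ∈ D ∨ (a, z') ∈ D) := by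
  obtain ⟨hAyy', hAzz', hAE1, hAE2⟩ := hs
  obtain ⟨h1yz, h1yz', h1tri⟩ := hAE1
  obtain ⟨h2z'y, h2z'y', h2tri⟩ := hAE2
  have hay_n : G.Adj a y → G.Ovl a y := nice_of_mem hD hay
  have hyz'' : (y, z') ∈ D := by
    have s1 : G.Step (y, z) (y, z') :=
      ⟨G.refl y, hAzz', ⟨h1yz, h1yz', h1tri⟩,
        ⟨nice_symm h1yz', nice_symm h1yz', fun _ _ => G.ovl_irrefl y⟩⟩
    have s2 : G.Step (y, z') (y', z') :=
      ⟨hAyy', G.refl z', ⟨h1yz', h1yz', fun _ _ => G.ovl_irrefl z'⟩,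
        ⟨h2z'y, h2z'y', h2tri⟩⟩
    exact mem_of_rel hD hyz hyz' (related_of_step s1) (related_of_step s2)
  have haz' : G.Adj a z' → G.Ovl a z' := by
    intro hadj; by_contra hno
    exact hdisj (a, y) hay
      (exch_mem_left hD hyz'' hadj (fun _ _ => hno) (nice_symm hay_n) h1yz')
  have htri : G.Ovl a z → G.Ovl a z' → ¬ G.Ovl z z' := by
    intro ho1 ho2 hozz'
    by_cases hyzovl : G.Ovl y z
    · have hno' : ¬ G.Ovl y z' := fun h => h1tri hyzovl h hozz'
      have hnadj : ¬ G.Adj y z' := fun h => hno' (h1yz' h)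
      exact hdisj (a, y) hay
        (exch_mem_left hD hyz'' (G.ovl_adj _ _ ho2) (fun _ h => absurd h hno')
          (nice_symm hay_n) (fun h => absurd h hnadj))
    · have hnadj : ¬ G.Adj y z := fun h => hyzovl (h1yz h)
      exact hdisj (a, y) hay
        (exch_mem_left hD hyz (G.ovl_adj _ _ ho1) (fun _ h => absurd h hyzovl)
          (nice_symm hay_n) (fun h => absurd h hnadj))
  refine ⟨⟨G.refl a, hAzz', ⟨haz, haz', htri⟩,
    ⟨nice_symm haz', nice_symm haz', fun _ _ => G.ovl_irrefl a⟩⟩, ?_⟩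
  by_cases hM1 : G.Adj a y' ∧ ¬ G.Ovl a y'
  · exact Or.inr (exch_mem_right hD hyz' hM1.1 (fun _ _ => hM1.2) (nice_symm haz') h2z'y')
  · have hM1' : G.Adj a y' → G.Ovl a y' := by
      intro h; by_contra h2; exact hM1 ⟨h, h2⟩
    by_cases hM2 : G.Ovl a y ∧ G.Ovl a y' ∧ G.Ovl y y'
    · obtain ⟨hoay, hoay', hoyy'⟩ := hM2
      by_cases hz'y : G.Ovl z' y
      · have hno : ¬ G.Ovl z' y' := fun h => h2tri hz'y h hoyy'
        have hnadj : ¬ G.Adj z' y' := fun h => hno (h2z'y' h)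
        exact Or.inr (exch_mem_right hD hyz' (G.ovl_adj _ _ hoay')
          (fun _ h => absurd h hno) (nice_symm haz') (fun h => absurd h hnadj))
      · have hnadj : ¬ G.Adj z' y := fun h => hz'y (h2z'y h)
        exact Or.inr (exch_mem_right hD hyz'' (G.ovl_adj _ _ hoay)
          (fun _ h => absurd h hz'y) (nice_symm haz') (fun h => absurd h hnadj))
    · have h3' : G.Ovl a y → G.Ovl a y' → ¬ G.Ovl y y' := fun h1 h2 ho => hM2 ⟨h1, h2, ho⟩
      have s1 : G.Step (a, y) (a, y') :=
        ⟨G.refl a, hAyy', ⟨hay_n, hM1', h3'⟩,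
          ⟨nice_symm hM1', nice_symm hM1', fun _ _ => G.ovl_irrefl a⟩⟩
      have s2 : G.Step (a, y') (a, y) :=
        ⟨G.refl a, G.symm _ _ hAyy',
          ⟨hM1', hay_n, fun h2 h1 ho => hM2 ⟨h1, h2, G.ovl_symm _ _ ho⟩⟩,
          ⟨nice_symm hay_n, nice_symm hay_n, fun _ _ => G.ovl_irrefl a⟩⟩
      exact Or.inl (mem_of_rel hD hay hay (related_of_step s1) (related_of_step s2))

lemma half_lemma (hD : G.IsDeltaClass D) (hdisj : ∀ p ∈ D, p.swap ∉ D)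
    {a b c : V} (hab : (a, b) ∈ D) (hbc : (b, c) ∈ D) :
    ∃ q ∈ D, G.Related (a, c) q := by
  have hnb_a : G.Adj b a → G.Ovl b a := nice_symm (nice_of_mem hD hab)
  have hnb_c : G.Adj b c → G.Ovl b c := nice_of_mem hD hbc
  have hnac : G.Adj a c → G.Ovl a c := by
    intro h; by_contra h2
    exact hdisj (a, b) hab (exch_mem_left hD hbc h (fun _ _ => h2) hnb_a hnb_c)
  have hrel : Relation.TransGen G.Step (b, c) (a, b) :=
    (related_iff_transGen).1 (hD.2.1 _ hbc _ hab)
  suffices h : ∀ (x : V × V), Relation.TransGen G.Step x (a, b) →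
      x ∈ D → (a, x.1) ∈ D → (G.Adj a x.2 → G.Ovl a x.2) →
      ((a, c) = (a, x.2) ∨ G.Related (a, c) (a, x.2)) →
      ∃ q ∈ D, G.Related (a, c) q by
    exact h (b, c) hrel hbc hab hnac (Or.inl rfl)
  intro x hx
  induction hx using Relation.TransGen.head_induction_on with
  | single hstep =>
    intro hxD hax1 hax2 hrel0
    rename_i x'
    obtain ⟨x1, x2⟩ := x'
    obtain ⟨hstep', -⟩ := main_step hD hdisj hstep hxD hab hax1 hax2
    refine ⟨(a, b), hab, ?_⟩
    rcases hrel0 with h0 | h0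
    · rw [h0]; exact related_of_step hstep'
    · exact related_trans h0 (related_of_step hstep')
  | head hstep htg IH =>
    intro hxD hax1 hax2 hrel0
    rename_i x' w
    obtain ⟨x1, x2⟩ := x'
    obtain ⟨w1, w2⟩ := w
    have hwD : (w1, w2) ∈ D :=
      mem_of_rel hD hxD hab (related_of_step hstep) ((related_iff_transGen).2 htg)
    obtain ⟨hstep', hmem⟩ := main_step hD hdisj hstep hxD hwD hax1 hax2
    have hrel0' : G.Related (a, c) (a, w2) := by
      rcases hrel0 with h0 | h0
      · rw [h0]; exact related_of_step hstep'
      · exact related_trans h0 (related_of_step hstep')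
    rcases hmem with hy | hz
    · exact IH hwD hy hstep'.2.2.1.2.1 (Or.inr hrel0')
    · exact ⟨(a, w2), hz, hrel0'⟩

lemma class_disjoint (hD : G.IsDeltaClass D) (hne : D ≠ ELGraph.inv D) :
    ∀ p ∈ D, p.swap ∉ D := by
  intro p hp hps
  apply hne
  have hDrel := hD.2.1
  have hpair : ∀ s ∈ D ∪ ELGraph.inv D, ∀ t ∈ D ∪ ELGraph.inv D, G.Related s t := by
    intro s hs t ht
    rcases hs with hs | hs <;> rcases ht with ht | ht
    · exact hDrel _ hs _ ht
    · have h2 : G.Related p t := by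
        have := related_swap (hDrel _ (ht : t.swap ∈ D) _ hps)
        simpa using this
      exact related_trans (hDrel _ hs _ hp) h2
    · have h1 : G.Related s p := by
        have := related_swap (hDrel _ hps _ (hs : s.swap ∈ D))
        simpa using this
      exact related_trans h1 (hDrel _ hp _ ht)
    · have := related_swap (hDrel _ (ht : t.swap ∈ D) _ (hs : s.swap ∈ D))
      simpa using this
  have hUD : D ∪ ELGraph.inv D = D :=
    hD.2.2 _ Set.subset_union_left hpair
  have hsub : ELGraph.inv D ⊆ D := by
    intro q hq
    have hq2 : q ∈ D ∪ ELGraph.inv D := Or.inr hq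
    rwa [hUD] at hq2
  apply Set.Subset.antisymm
  · intro q hq
    show q.swap ∈ D
    exact hsub (show (q.swap).swap ∈ D by simpa using hq)
  · exact hsub

lemma inv_class (hD : G.IsDeltaClass D) : G.IsDeltaClass (ELGraph.inv D) := by
  obtain ⟨⟨p0, hp0⟩, hpair, hmax⟩ := hD
  refine ⟨⟨p0.swap, show (p0.swap).swap ∈ D by simpa using hp0⟩, ?_, ?_⟩
  · intro p hp q hq
    have := related_swap (hpair _ (hq : q.swap ∈ D) _ (hp : p.swap ∈ D))
    simpa using this
  · intro B hsub hB
    have h1 : D ⊆ ELGraph.inv B := by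
      intro q hq
      show q.swap ∈ B
      exact hsub (show (q.swap).swap ∈ D by simpa using hq)
    have h2 : ∀ p ∈ ELGraph.inv B, ∀ q ∈ ELGraph.inv B, G.Related p q := by
      intro p hp q hq
      have := related_swap (hB _ (hq : q.swap ∈ B) _ (hp : p.swap ∈ B))
      simpa using this
    have h3 : ELGraph.inv B = D := hmax _ h1 h2
    rw [← h3]
    ext q
    constructor
    · intro hq
      show q.swap ∈ ELGraph.inv B
      show (q.swap).swap ∈ B
      simpa using hq
    · intro hq
      have : (q.swap).swap ∈ B := hq
      simpa using this

end ELGraph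

/-- A Δ-implication class `D` with `D ≠ D⁻¹` is transitive. -/
theorem deltaClass_transitive
    {V : Type} [Fintype V] (G : ELGraph V) (D : Set (V × V))
    (hD : G.IsDeltaClass D) (hne : D ≠ ELGraph.inv D)
    (a b c : V) (hab : (a, b) ∈ D) (hbc : (b, c) ∈ D) :
    (a, c) ∈ D := by
  have hdisj : ∀ p ∈ D, p.swap ∉ D := ELGraph.class_disjoint hD hne
  obtain ⟨q1, hq1D, hq1⟩ := ELGraph.half_lemma hD hdisj hab hbc
  have hDinv := ELGraph.inv_class hD
  have hdisj' : ∀ p ∈ ELGraph.inv D, p.swap ∉ ELGraph.inv D := by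
    intro p hp hps
    exact hdisj p.swap hp hps
  have hcb : (c, b) ∈ ELGraph.inv D := by
    show ((c, b) : V × V).swap ∈ D
    simpa using hbc
  have hba : (b, a) ∈ ELGraph.inv D := by
    show ((b, a) : V × V).swap ∈ D
    simpa using hab
  obtain ⟨q2, hq2D, hq2⟩ := ELGraph.half_lemma hDinv hdisj' hcb hba
  have hq2s : q2.swap ∈ D := hq2D
  have hq2' : G.Related q2.swap (a, c) := by
    have h := ELGraph.related_swap hq2
    exact h
  have hB : ∀ s ∈ insert (a, c) D, ∀ t ∈ insert (a, c) D, G.Related s t := by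
    intro s hs t ht
    rcases Set.mem_insert_iff.1 hs with hs' | hs' <;> rcases Set.mem_insert_iff.1 ht with ht' | ht'
    · rw [hs', ht']
      exact ELGraph.related_trans (ELGraph.related_trans hq1 (hD.2.1 _ hq1D _ hq2s)) hq2'
    · rw [hs']; exact ELGraph.related_trans hq1 (hD.2.1 _ hq1D _ ht')
    · rw [ht']; exact ELGraph.related_trans (hD.2.1 _ hs' _ hq2s) hq2'
    · exact hD.2.1 _ hs' _ ht' 
  have hmax := hD.2.2 _ (Set.subset_insert _ _) hB
  rw [← hmax]
  exact Set.mem_insert _ _
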